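/- Let A ∈ ℝ^{S×S} be symmetric with spectral decomposition A = E Λ Eᵀ where E is orthogonal and the eigenvalues along the diagonal of Λ are in ascending order. If K ≤ S, then the matrix Q* consisting of the first K columns of E minimizes Q ↦ tr(Qᵀ A Q) over all Q ∈ ℝ^{S×K} with QᵀQ = I_K, and the minimum value equals the sum of the K smallest eigenvalues of A. -/

import Mathlib

open Matrix BigOperators

private lemma sum_castLE {S K : ℕ} (hK : K ≤ S) (f : Fin S → ℝ) :
    ∑ j : Fin K, f (Fin.castLE hK j) = ∑ i : Fin S, if (i : ℕ) < K then f i else 0 := by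
  classical
  set g : ℕ → ℝ := fun n => if h : n < S then f ⟨n, h⟩ else 0 with hg
  have h1 : ∑ j : Fin K, f (Fin.castLE hK j) = ∑ n ∈ Finset.range K, g n := by
    rw [← Fin.sum_univ_eq_sum_range g K]
    refine Finset.sum_congr rfl fun j _ => ?_
    simp only [hg]
    rw [dif_pos (lt_of_lt_of_le j.isLt hK)]
    exact congrArg f (Fin.ext rfl)
  have h2 : ∑ i : Fin S, (if (i : ℕ) < K then f i else 0)
      = ∑ n ∈ Finset.range S, (if n < K then g n else 0) := by
    rw [← Fin.sum_univ_eq_sum_range (fun n => if n < K then g n else 0) S]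
    refine Finset.sum_congr rfl fun i _ => ?_
    simp only [hg]
    rw [dif_pos i.isLt]
  have h3 : ∑ n ∈ Finset.range S, (if n < K then g n else 0)
      = ∑ n ∈ (Finset.range S).filter (· < K), g n := by
    rw [Finset.sum_filter]
  have h4 : (Finset.range S).filter (· < K) = Finset.range K := by
    ext n; simp [Finset.mem_filter, Finset.mem_range]; omega
  rw [h1, h2, h3, h4]

private lemma key_ineq {S K : ℕ} (hK : K ≤ S) (d : Fin S → ℝ) (hd : Monotone d)
    (t : Fin S → ℝ) (h0 : ∀ i, 0 ≤ t i) (h1 : ∀ i, t i ≤ 1)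
    (hsum : ∑ i, t i = (K : ℝ)) :
    ∑ j : Fin K, d (Fin.castLE hK j) ≤ ∑ i, d i * t i := by
  classical
  rcases eq_or_lt_of_le hK with h | h
  · -- K = S : all t i = 1
    subst h
    have ht : ∀ i ∈ Finset.univ, t i = 1 := by
      intro i _
      by_contra hne
      have hlt : t i < 1 := lt_of_le_of_ne (h1 i) hne
      have hstrict : ∑ j, t j < ∑ _j : Fin K, (1 : ℝ) :=
        Finset.sum_lt_sum (fun j _ => h1 j) ⟨i, Finset.mem_univ i, hlt⟩
      rw [hsum] at hstrict
      simp at hstrict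
    refine le_of_eq (Finset.sum_congr rfl fun i hi => ?_)
    rw [ht i hi, mul_one]
    exact congrArg d (Fin.ext rfl)
  · set lam := d ⟨K, h⟩ with hlam
    have key : ∀ i : Fin S, 0 ≤ (d i - lam) * (t i - if (i : ℕ) < K then 1 else 0) := by
      intro i
      by_cases hi : (i : ℕ) < K
      · rw [if_pos hi]
        have ha : d i ≤ lam := hd (Fin.le_def.2 (le_of_lt hi))
        have hb : t i ≤ 1 := h1 i
        nlinarith
      · rw [if_neg hi]
        apply mul_nonneg
        · refine sub_nonneg.2 (hd ?_)
          exact Fin.le_def.2 (not_lt.1 hi)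
        · simpa using h0 i
    have hsumc : ∑ i : Fin S, (if (i : ℕ) < K then (1 : ℝ) else 0) = (K : ℝ) := by
      rw [← sum_castLE hK (fun _ => (1 : ℝ))]
      simp
    have hdc : ∑ i : Fin S, (if (i : ℕ) < K then d i else 0)
        = ∑ j : Fin K, d (Fin.castLE hK j) := (sum_castLE hK d).symm
    have expand : ∑ i, (d i - lam) * (t i - if (i : ℕ) < K then 1 else 0)
        = ∑ i, d i * t i - ∑ j : Fin K, d (Fin.castLE hK j) := by
      have e1 : ∀ i : Fin S, (d i - lam) * (t i - if (i : ℕ) < K then 1 else 0)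
          = d i * t i - (if (i : ℕ) < K then d i else 0) - lam * t i
            + lam * (if (i : ℕ) < K then (1 : ℝ) else 0) := by
        intro i
        by_cases hi : (i : ℕ) < K <;> simp [hi] <;> ring
      rw [Finset.sum_congr rfl (fun i _ => e1 i)]
      rw [Finset.sum_add_distrib, Finset.sum_sub_distrib, Finset.sum_sub_distrib,
        ← Finset.mul_sum, ← Finset.mul_sum, hsum, hsumc, hdc]
      ring
    have hnn := Finset.sum_nonneg (fun i (_ : i ∈ Finset.univ) => key i)
    rw [expand] at hnn
    linarith

theorem stmt_7 (S K : ℕ) (hK : K ≤ S)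
    (A E : Matrix (Fin S) (Fin S) ℝ) (hA : A.IsSymm)
    (d : Fin S → ℝ) (hd : Monotone d)
    (hE : Eᵀ * E = 1) (hE' : E * Eᵀ = 1)
    (hdec : A = E * Matrix.diagonal d * Eᵀ)
    (Qstar : Matrix (Fin S) (Fin K) ℝ)
    (hQstar : Qstar = fun i j => E i (Fin.castLE hK j)) :
    Qstarᵀ * Qstar = 1 ∧
    (∀ Q : Matrix (Fin S) (Fin K) ℝ, Qᵀ * Q = 1 →
      (Qstarᵀ * A * Qstar).trace ≤ (Qᵀ * A * Q).trace) ∧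
    (Qstarᵀ * A * Qstar).trace = ∑ i : Fin K, d (Fin.castLE hK i) := by
  classical
  subst hQstar
  set Qstar : Matrix (Fin S) (Fin K) ℝ := fun i j => E i (Fin.castLE hK j) with hQs
  -- orthonormality of Qstar
  have hQQ : Qstarᵀ * Qstar = 1 := by
    ext j k
    have h2 := congrFun (congrFun hE (Fin.castLE hK j)) (Fin.castLE hK k)
    simp only [Matrix.mul_apply, Matrix.transpose_apply]
    simp only [Matrix.mul_apply, Matrix.transpose_apply, Matrix.one_apply, hQs] at h2 ⊢
    rw [h2]
    by_cases hjk : j = k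
    · simp [hjk]
    · rw [if_neg hjk, if_neg]
      intro hc
      exact hjk (Fin.castLE_injective hK hc)
  -- trace formula
  have main : ∀ Q : Matrix (Fin S) (Fin K) ℝ,
      (Qᵀ * A * Q).trace = ∑ i, d i * ∑ j, ((Eᵀ * Q) i j) ^ 2 := by
    intro Q
    have hrw : Qᵀ * A * Q = (Eᵀ * Q)ᵀ * (Matrix.diagonal d * (Eᵀ * Q)) := by
      rw [hdec, Matrix.transpose_mul, Matrix.transpose_transpose]
      simp only [Matrix.mul_assoc]
    rw [hrw]
    set P := Eᵀ * Q with hP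
    have entry : ∀ j : Fin K, (Pᵀ * (Matrix.diagonal d * P)) j j
        = ∑ k, P k j * d k * P k j := by
      intro j
      simp only [Matrix.mul_apply, Matrix.transpose_apply, Matrix.diagonal_apply,
        ite_mul, zero_mul, Finset.sum_ite_eq, Finset.mem_univ, ite_true]
      exact Finset.sum_congr rfl fun k _ => by ring
    rw [Matrix.trace]
    simp only [Matrix.diag_apply]
    rw [Finset.sum_congr rfl (fun j _ => entry j), Finset.sum_comm]
    refine Finset.sum_congr rfl fun k _ => ?_
    rw [Finset.mul_sum]
    refine Finset.sum_congr rfl fun j _ => ?_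
    ring
  -- properties of row sums of squares of P = Eᵀ Q
  have props : ∀ Q : Matrix (Fin S) (Fin K) ℝ, Qᵀ * Q = 1 →
      (∀ i, 0 ≤ ∑ j, ((Eᵀ * Q) i j) ^ 2) ∧ (∀ i, ∑ j, ((Eᵀ * Q) i j) ^ 2 ≤ 1) ∧
      (∑ i, ∑ j, ((Eᵀ * Q) i j) ^ 2 = (K : ℝ)) := by
    intro Q hQ
    set P := Eᵀ * Q with hP
    have hPP : Pᵀ * P = 1 := by
      rw [hP, Matrix.transpose_mul, Matrix.transpose_transpose,
        Matrix.mul_assoc, ← Matrix.mul_assoc E, hE', Matrix.one_mul, hQ]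
    refine ⟨fun i => Finset.sum_nonneg fun j _ => sq_nonneg _, ?_, ?_⟩
    · -- each row sum ≤ 1
      intro i
      set B := P * Pᵀ with hB
      have hBB : B * B = B := by
        rw [hB, Matrix.mul_assoc, ← Matrix.mul_assoc Pᵀ, hPP, Matrix.one_mul]
      have hBsym : ∀ a b, B a b = B b a := by
        intro a b
        simp only [hB, Matrix.mul_apply, Matrix.transpose_apply]
        exact Finset.sum_congr rfl fun k _ => mul_comm _ _
      have hBi : B i i = ∑ j, (P i j) ^ 2 := by
        simp only [hB, Matrix.mul_apply, Matrix.transpose_apply]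
        exact Finset.sum_congr rfl fun j _ => (sq (P i j)).symm
      have hself : B i i = ∑ k, (B i k) ^ 2 := by
        conv_lhs => rw [← hBB]
        simp only [Matrix.mul_apply]
        refine Finset.sum_congr rfl fun k _ => ?_
        rw [hBsym k i]; ring
      have hle : (B i i) ^ 2 ≤ B i i :=
        calc (B i i) ^ 2 ≤ ∑ k, (B i k) ^ 2 :=
              Finset.single_le_sum (f := fun k => (B i k) ^ 2)
                (fun k _ => sq_nonneg _) (Finset.mem_univ i)
          _ = B i i := hself.symm
      have hnn : 0 ≤ B i i := by
        rw [hBi]; exact Finset.sum_nonneg fun j _ => sq_nonneg _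
      rw [← hBi]
      nlinarith
    · -- total sum = K
      rw [Finset.sum_comm]
      have : ∀ j : Fin K, ∑ i, (P i j) ^ 2 = 1 := by
        intro j
        have h2 := congrFun (congrFun hPP j) j
        simp only [Matrix.mul_apply, Matrix.transpose_apply, Matrix.one_apply_eq] at h2
        rw [← h2]
        exact Finset.sum_congr rfl fun i _ => sq (P i j)
      rw [Finset.sum_congr rfl (fun j _ => this j)]
      simp
  -- Eᵀ * Qstar is the "inclusion" matrix
  have hPQ : ∀ i j, (Eᵀ * Qstar) i j = if i = Fin.castLE hK j then 1 else 0 := by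
    intro i j
    have h2 := congrFun (congrFun hE i) (Fin.castLE hK j)
    simp only [Matrix.mul_apply, Matrix.transpose_apply, Matrix.one_apply, hQs] at h2 ⊢
    exact h2
  have hrow : ∀ i : Fin S, (∑ j, ((Eᵀ * Qstar) i j) ^ 2) = if (i : ℕ) < K then 1 else 0 := by
    intro i
    rw [Finset.sum_congr rfl (fun j _ => by rw [hPQ i j])]
    have hsq : ∀ j : Fin K, ((if i = Fin.castLE hK j then (1:ℝ) else 0)) ^ 2
        = if i = Fin.castLE hK j then (1:ℝ) else 0 := by
      intro j; by_cases hc : i = Fin.castLE hK j <;> simp [hc]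
    rw [Finset.sum_congr rfl (fun j _ => hsq j)]
    by_cases hi : (i : ℕ) < K
    · rw [if_pos hi]
      rw [Finset.sum_eq_single (⟨(i : ℕ), hi⟩ : Fin K)]
      · rw [if_pos]; exact Fin.ext rfl
      · intro b _ hb
        rw [if_neg]
        intro hc
        exact hb (Fin.ext (by simpa using (congrArg Fin.val hc).symm))
      · intro hmem; exact absurd (Finset.mem_univ _) hmem
    · rw [if_neg hi]
      apply Finset.sum_eq_zero
      intro j _
      rw [if_neg]
      intro hc
      exact hi (by rw [hc]; exact j.isLt)
  -- value at Qstar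
  have hval : (Qstarᵀ * A * Qstar).trace = ∑ j : Fin K, d (Fin.castLE hK j) := by
    rw [main Qstar]
    rw [Finset.sum_congr rfl (fun i _ => by rw [hrow i])]
    simp only [mul_ite, mul_one, mul_zero]
    exact (sum_castLE hK d).symm
  refine ⟨hQQ, ?_, hval⟩
  intro Q hQ
  rw [hval, main Q]
  obtain ⟨h0, h1, hs⟩ := props Q hQ
  exact key_ineq hK d hd _ h0 h1 hs
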